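/- For every nonzero real number y, ∫_{-∞}^{∞} e^{iyu} / cosh²(u) du = πy / sinh(πy/2), and in particular this quantity is nonnegative. -/

import Mathlib

open Real MeasureTheory Set

noncomputable def sechPhi (u : ℝ) : ℝ := (1 + Real.exp (-2 * u))⁻¹

lemma sechPhi_pos_denom (u : ℝ) : 0 < 1 + Real.exp (-2 * u) := by positivity

lemma sechPhi_mem (u : ℝ) : sechPhi u ∈ Ioo (0:ℝ) 1 := by
  constructor
  · exact inv_pos.2 (sechPhi_pos_denom u)
  · rw [sechPhi, inv_lt_one_iff₀]
    right
    linarith [Real.exp_pos (-2 * u)]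

lemma sechPhi_image : sechPhi '' univ = Ioo (0:ℝ) 1 := by
  apply Subset.antisymm
  · rintro x ⟨u, -, rfl⟩; exact sechPhi_mem u
  · rintro x ⟨hx0, hx1⟩
    refine ⟨-Real.log (1/x - 1) / 2, trivial, ?_⟩
    have h1 : (0:ℝ) < 1/x - 1 := by
      have : 1 < 1/x := by
        rw [one_div, one_lt_inv_iff₀]
        exact ⟨hx0, hx1⟩
      linarith
    have : Real.exp (-2 * (-Real.log (1/x - 1) / 2)) = 1/x - 1 := by
      rw [show -2 * (-Real.log (1/x - 1) / 2) = Real.log (1/x - 1) by ring]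
      exact Real.exp_log h1
    rw [sechPhi, this]
    field_simp
    ring

lemma sechPhi_inj : Function.Injective sechPhi := by
  intro a b hab
  have h : Real.exp (-2 * a) = Real.exp (-2 * b) := by
    have := congrArg (·⁻¹) hab
    simp only [sechPhi, inv_inv] at this
    linarith
  have := Real.exp_injective h
  linarith

lemma exp_neg_two_mul (u : ℝ) : Real.exp (-2 * u) = Real.exp (-u) * Real.exp (-u) := by
  rw [← Real.exp_add]; ring_nf

lemma sechPhi_denom_eq (u : ℝ) :
    1 + Real.exp (-2 * u) = Real.exp (-u) * (2 * Real.cosh u) := by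
  rw [Real.cosh_eq, exp_neg_two_mul]
  have he2 : Real.exp u * Real.exp (-u) = 1 := by
    rw [← Real.exp_add]; simp
  linear_combination -he2

lemma sechPhi_hasDerivAt (u : ℝ) :
    HasDerivAt sechPhi (1 / (2 * Real.cosh u ^ 2)) u := by
  have h1 : HasDerivAt (fun u : ℝ => 1 + Real.exp (-2 * u)) (-2 * Real.exp (-2 * u)) u := by
    have := (Real.hasDerivAt_exp (-2 * u)).comp u ((hasDerivAt_id u).const_mul (-2))
    simpa [mul_comm] using this.const_add 1
  have h2 := h1.inv (ne_of_gt (sechPhi_pos_denom u))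
  refine h2.congr_deriv ?_
  rw [sechPhi_denom_eq, exp_neg_two_mul]
  have hb : Real.exp (-u) ≠ 0 := (Real.exp_pos _).ne'
  have hc : Real.cosh u ≠ 0 := (Real.cosh_pos u).ne'
  field_simp

lemma one_sub_sechPhi (u : ℝ) :
    1 - sechPhi u = Real.exp (-2 * u) * (1 + Real.exp (-2 * u))⁻¹ := by
  rw [sechPhi]
  have := sechPhi_pos_denom u
  field_simp
  ring

theorem fourier_sech_sq (y : ℝ) (hy : y ≠ 0) :
    (∫ u : ℝ, Complex.exp (y * u * Complex.I) / (Real.cosh u : ℂ) ^ 2)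
      = ((π * y / Real.sinh (π * y / 2) : ℝ) : ℂ) ∧
    0 ≤ π * y / Real.sinh (π * y / 2) := by
  have hsinh : Real.sinh (π * y / 2) ≠ 0 := by
    simp only [ne_eq, Real.sinh_eq_zero]
    exact div_ne_zero (mul_ne_zero Real.pi_ne_zero hy) two_ne_zero
  constructor
  · -- the main computation
    set s : ℂ := Complex.I * y / 2 with hs_def
    have hs_ne : s ≠ 0 := by
      simp [hs_def, Complex.I_ne_zero, hy, div_eq_zero_iff]
    -- the beta integral
    set g : ℝ → ℂ := fun x => (x : ℂ) ^ s * (1 - (x : ℂ)) ^ (-s) with hg_def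
    have hbeta : Complex.betaIntegral (1 + s) (1 - s) = ∫ x in Ioo (0:ℝ) 1, g x := by
      rw [Complex.betaIntegral, intervalIntegral.integral_of_le zero_le_one,
        integral_Ioc_eq_integral_Ioo]
      congr 1
      ext x
      simp [hg_def]
    -- change of variables
    have hCOV := integral_image_eq_integral_abs_deriv_smul MeasurableSet.univ
      (fun x _ => (sechPhi_hasDerivAt x).hasDerivWithinAt) (sechPhi_inj.injOn) g
    rw [sechPhi_image] at hCOV
    -- pointwise identification of the transformed integrand
    have hpt : ∀ u : ℝ, |1 / (2 * Real.cosh u ^ 2)| • g (sechPhi u)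
        = (1/2 : ℂ) * (Complex.exp (y * u * Complex.I) / (Real.cosh u : ℂ) ^ 2) := by
      intro u
      have hcosh : (0:ℝ) < Real.cosh u := Real.cosh_pos u
      have habs : |1 / (2 * Real.cosh u ^ 2)| = 1 / (2 * Real.cosh u ^ 2) := by
        rw [abs_of_pos]; positivity
      have hx0 : 0 < sechPhi u := (sechPhi_mem u).1
      have hx1 : sechPhi u < 1 := (sechPhi_mem u).2
      have h1x : (0:ℝ) < 1 - sechPhi u := by linarith
      have hgval : g (sechPhi u) = Complex.exp (y * u * Complex.I) := by
        rw [hg_def]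
        simp only
        rw [Complex.cpow_def_of_ne_zero (by exact_mod_cast hx0.ne'),
          show (1 - (sechPhi u : ℂ)) = ((1 - sechPhi u : ℝ) : ℂ) by push_cast; ring,
          Complex.cpow_def_of_ne_zero (by exact_mod_cast h1x.ne'),
          ← Complex.ofReal_log hx0.le, ← Complex.ofReal_log h1x.le,
          ← Complex.exp_add]
        congr 1
        have hlog : Real.log (sechPhi u) - Real.log (1 - sechPhi u) = 2 * u := by
          rw [one_sub_sechPhi, sechPhi,
            Real.log_inv, Real.log_mul (Real.exp_pos _).ne' (by positivity),
            Real.log_inv, Real.log_exp]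
          ring
        have : (Real.log (sechPhi u) : ℂ) - (Real.log (1 - sechPhi u) : ℂ) = (2 * u : ℝ) := by
          rw [← Complex.ofReal_sub, hlog]
        calc (Real.log (sechPhi u) : ℂ) * s + (Real.log (1 - sechPhi u) : ℂ) * (-s)
            = ((Real.log (sechPhi u) : ℂ) - (Real.log (1 - sechPhi u) : ℂ)) * s := by ring
          _ = ((2 * u : ℝ) : ℂ) * s := by rw [this]
          _ = y * u * Complex.I := by
              rw [hs_def]; push_cast; ring
      rw [habs, hgval, Complex.real_smul]
      push_cast
      ring
    -- put it together
    have key : (∫ x in Ioo (0:ℝ) 1, g x)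
        = (1/2 : ℂ) * ∫ u : ℝ, Complex.exp (y * u * Complex.I) / (Real.cosh u : ℂ) ^ 2 := by
      rw [hCOV, Measure.restrict_univ]
      rw [← integral_const_mul]
      exact integral_congr_ae (Filter.Eventually.of_forall hpt)
    -- evaluate the beta integral via Gamma functions
    have h1s : 0 < (1 + s).re := by
      simp [hs_def, Complex.add_re, Complex.div_re]
    have h2s : 0 < (1 - s).re := by
      simp [hs_def, Complex.sub_re, Complex.div_re]
    have hGamma := Complex.Gamma_mul_Gamma_eq_betaIntegral h1s h2s
    have hsum : (1 + s) + (1 - s) = 2 := by ring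
    have hG2 : Complex.Gamma 2 = 1 := by
      rw [show (2:ℂ) = 1 + 1 by norm_num, Complex.Gamma_add_one 1 one_ne_zero,
        Complex.Gamma_one, mul_one]
    rw [hsum, hG2, one_mul] at hGamma
    have hG1 : Complex.Gamma (1 + s) = s * Complex.Gamma s := by
      rw [add_comm, Complex.Gamma_add_one s hs_ne]
    have hrefl : Complex.Gamma s * Complex.Gamma (1 - s) = π / Complex.sin (π * s) :=
      Complex.Gamma_mul_Gamma_one_sub s
    have hsin : Complex.sin (π * s) = (Real.sinh (π * y / 2) : ℂ) * Complex.I := by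
      rw [show (π : ℂ) * s = ((π * y / 2 : ℝ) : ℂ) * Complex.I by
        rw [hs_def]; push_cast; ring]
      rw [Complex.sin_mul_I, Complex.ofReal_sinh]
    have hbval : Complex.betaIntegral (1 + s) (1 - s)
        = ((π * y / 2 / Real.sinh (π * y / 2) : ℝ) : ℂ) := by
      have hI : Complex.I ≠ 0 := Complex.I_ne_zero
      rw [← hGamma, hG1, mul_assoc, hrefl, hsin, hs_def]
      rw [show ((π * y / 2 / Real.sinh (π * y / 2) : ℝ) : ℂ)
          = (π : ℂ) * y / 2 / ((Real.sinh (π * y / 2) : ℝ) : ℂ) by push_cast; ring]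
      rw [show Complex.I * (y : ℂ) / 2 *
            ((π : ℂ) / (((Real.sinh (π * y / 2) : ℝ) : ℂ) * Complex.I))
          = (π : ℂ) * y / 2 / ((Real.sinh (π * y / 2) : ℝ) : ℂ) *
            (Complex.I * Complex.I⁻¹) by ring]
      rw [mul_inv_cancel₀ hI, mul_one]
    rw [hbval] at hbeta
    have hfin : ((π * y / 2 / Real.sinh (π * y / 2) : ℝ) : ℂ)
        = (1/2 : ℂ) * ∫ u : ℝ, Complex.exp (y * u * Complex.I) / (Real.cosh u : ℂ) ^ 2 :=
      hbeta.trans key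
    have h2 : (∫ u : ℝ, Complex.exp (y * u * Complex.I) / (Real.cosh u : ℂ) ^ 2)
        = 2 * ((π * y / 2 / Real.sinh (π * y / 2) : ℝ) : ℂ) := by
      rw [hfin]; ring
    rw [h2]
    push_cast
    ring
  · -- nonnegativity
    rcases lt_or_gt_of_ne hy with h | h
    · have h1 : π * y < 0 := mul_neg_of_pos_of_neg Real.pi_pos h
      have h2 : Real.sinh (π * y / 2) < 0 := by
        rw [← Real.sinh_zero]
        exact Real.sinh_lt_sinh.2 (by linarith)
      exact le_of_lt (div_pos_of_neg_of_neg h1 h2)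
    · have h1 : 0 < π * y := mul_pos Real.pi_pos h
      have h2 : 0 < Real.sinh (π * y / 2) := by
        rw [← Real.sinh_zero]
        exact Real.sinh_lt_sinh.2 (by linarith)
      positivity
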